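/- Let f(s) = 1 for 0 ≤ s ≤ 1/2 and f(s) = 0 for 1/2 < s ≤ 1, and for γ > 0 let u(γ) = u(γ, f) and σ²(γ) = σ²(γ, f) be the corresponding global location and limiting variance. Then lim_{γ→+∞} γ·e^{γ/2}·u(γ) = 1 and lim_{γ→+∞} γ·e^{γ/2}·σ²(γ) = 1; that is, u(γ) ∼ e^{−γ/2}/γ and σ²(γ) ∼ e^{−γ/2}/γ as γ → +∞. -/

import Mathlib

open MeasureTheory Filter Set
open scoped Topology

/-- Piecewise continuity on `[0,1]`: continuity within `[0,1]` away from a finite set. -/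
def PiecewiseContinuousOn (f : ℝ → ℝ) : Prop :=
  ∃ S : Finset ℝ, ∀ x ∈ Set.Icc (0:ℝ) 1, x ∉ S → ContinuousWithinAt f (Set.Icc (0:ℝ) 1) x

/-- The global location `u(γ, f)`. -/
noncomputable def uLoc (γ : ℝ) (f : ℝ → ℝ) : ℝ :=
  (1/γ) * Real.log ((∫ s in (0:ℝ)..1, Real.exp (γ * s)) /
    (∫ s in (0:ℝ)..1, Real.exp (γ * (s - f s))))

/-- The limiting variance `σ²(γ, f)`. -/
noncomputable def sigmaSq (γ : ℝ) (f : ℝ → ℝ) : ℝ :=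
  (1/(Real.exp γ - 1)^2) *
    ∫ s in (0:ℝ)..1,
      (Real.exp (2*γ*(uLoc γ f + s - f s)) - Real.exp (2*γ*s))

namespace HexAux

lemma expInt (c : ℝ) (hc : c ≠ 0) (a b : ℝ) :
    ∫ s in a..b, Real.exp (c * s) = (Real.exp (c*b) - Real.exp (c*a))/c := by
  rw [intervalIntegral.integral_comp_mul_left (fun x => Real.exp x) hc]
  simp [integral_exp, div_eq_inv_mul]

noncomputable def fhex : ℝ → ℝ := fun s => if s ≤ 1/2 then 1 else 0

lemma eqOn1 (c : ℝ) : EqOn (fun s => Real.exp (c * (s - fhex s)))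
    (fun s => Real.exp (-c) * Real.exp (c * s)) (uIcc (0:ℝ) (1/2)) := by
  intro s hs
  rw [uIcc_of_le (by norm_num)] at hs
  simp only [fhex, if_pos hs.2, ← Real.exp_add]
  ring_nf

lemma eqOn2 (c : ℝ) : EqOn (fun s => Real.exp (c * (s - fhex s)))
    (fun s => Real.exp (c * s)) (Ioc (1/2:ℝ) 1) := by
  intro s hs
  simp only [fhex, if_neg (not_le.2 hs.1), sub_zero]

lemma intble1 (c : ℝ) : IntervalIntegrable (fun s => Real.exp (c * (s - fhex s))) volume 0 (1/2) := by
  apply ContinuousOn.intervalIntegrable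
  exact ((continuous_const.mul (Real.continuous_exp.comp (continuous_const.mul continuous_id))).continuousOn).congr (eqOn1 c)

lemma intble2 (c : ℝ) : IntervalIntegrable (fun s => Real.exp (c * (s - fhex s))) volume (1/2) 1 := by
  rw [intervalIntegrable_iff_integrableOn_Ioc_of_le (by norm_num)]
  exact (((Real.continuous_exp.comp (continuous_const.mul continuous_id)).integrableOn_Ioc)).congr_fun
    (fun s hs => ((eqOn2 c) hs).symm) measurableSet_Ioc

lemma intbleF (c : ℝ) : IntervalIntegrable (fun s => Real.exp (c * (s - fhex s))) volume 0 1 :=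
  (intble1 c).trans (intble2 c)

lemma fInt (c : ℝ) (hc : c ≠ 0) :
    ∫ s in (0:ℝ)..1, Real.exp (c * (s - fhex s))
      = (Real.exp (c/2 - c) - Real.exp (-c) + Real.exp c - Real.exp (c/2)) / c := by
  rw [← intervalIntegral.integral_add_adjacent_intervals (intble1 c) (intble2 c)]
  have h1 : ∫ s in (0:ℝ)..(1/2), Real.exp (c * (s - fhex s))
      = Real.exp (-c) * ((Real.exp (c * (1/2)) - Real.exp (c * 0))/c) := by
    rw [intervalIntegral.integral_congr (eqOn1 c), intervalIntegral.integral_const_mul, expInt c hc]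
  have h2 : ∫ s in (1/2:ℝ)..1, Real.exp (c * (s - fhex s))
      = (Real.exp (c * 1) - Real.exp (c * (1/2)))/c := by
    rw [intervalIntegral.integral_of_le (by norm_num),
      setIntegral_congr_fun measurableSet_Ioc (eqOn2 c),
      ← intervalIntegral.integral_of_le (by norm_num), expInt c hc]
  rw [h1, h2]
  rw [show c * (1/2) = c/2 by ring, show c * 0 = 0 by ring, show c * 1 = c by ring]
  have : Real.exp (c/2 - c) = Real.exp (-c) * Real.exp (c/2) := by
    rw [← Real.exp_add]; ring_nf
  rw [this]
  field_simp
  simp only [Real.exp_zero]; ring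

lemma ratio_closed (γ : ℝ) (hγ : 0 < γ) :
    (∫ s in (0:ℝ)..1, Real.exp (γ * s)) /
      (∫ s in (0:ℝ)..1, Real.exp (γ * (s - fhex s)))
    = 1 / (1 - Real.exp (-(γ/2)) + Real.exp (-(γ/2))^2) := by
  set y := Real.exp (-(γ/2)) with hydef
  have hy0 : 0 < y := Real.exp_pos _
  have hy1 : y < 1 := by
    rw [hydef]; apply Real.exp_lt_one_iff.2; linarith
  have h1 : Real.exp (-γ) = y^2 := by
    rw [hydef, ← Real.exp_nat_mul]; norm_num; ring
  have h4 : Real.exp γ = (y^2)⁻¹ := by rw [← h1, ← Real.exp_neg, neg_neg]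
  have h5 : Real.exp (γ/2) = y⁻¹ := by rw [hydef, ← Real.exp_neg, neg_neg]
  have hq : (0:ℝ) < 1 - y + y^2 := by nlinarith
  have hc : γ ≠ 0 := ne_of_gt hγ
  rw [expInt γ hc, fInt γ hc]
  rw [show γ * 1 = γ by ring, show γ * 0 = 0 by ring, Real.exp_zero,
    show γ/2 - γ = -(γ/2) by ring]
  rw [← hydef, h1, h4, h5]
  have he : y - y^2 + (y^2)⁻¹ - y⁻¹ = ((1-y)*(1+y)*(1 - y + y^2))/y^2 := by
    field_simp; ring
  rw [he]
  have n1 : (1:ℝ) - y ≠ 0 := by linarith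
  have n2 : (1:ℝ) + y ≠ 0 := by linarith
  field_simp [hc, ne_of_gt hq, ne_of_gt hy0, n1, n2]
  ring

lemma uLoc_closed (γ : ℝ) (hγ : 0 < γ) :
    uLoc γ fhex = (1/γ) * Real.log (1 / (1 - Real.exp (-(γ/2)) + Real.exp (-(γ/2))^2)) := by
  unfold uLoc
  rw [ratio_closed γ hγ]

lemma target1_eq (γ : ℝ) (hγ : 0 < γ) :
    γ * Real.exp (γ/2) * uLoc γ fhex
      = -Real.log (1 - Real.exp (-(γ/2)) + Real.exp (-(γ/2))^2) / Real.exp (-(γ/2)) := by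
  set y := Real.exp (-(γ/2)) with hydef
  have hy0 : 0 < y := Real.exp_pos _
  have hy1 : y < 1 := by
    rw [hydef]; apply Real.exp_lt_one_iff.2; linarith
  have hq : (0:ℝ) < 1 - y + y^2 := by nlinarith
  have h5 : Real.exp (γ/2) = y⁻¹ := by rw [hydef, ← Real.exp_neg, neg_neg]
  rw [uLoc_closed γ hγ, ← hydef, h5, one_div (1 - y + y^2), Real.log_inv]
  field_simp

lemma sigma_closed (γ : ℝ) (hγ : 0 < γ) :
    γ * Real.exp (γ/2) * sigmaSq γ fhex
      = ((1 + Real.exp (-(γ/2))^2) * (1 - Real.exp (-(γ/2)))) /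
        ((1 + Real.exp (-(γ/2))) * (1 - Real.exp (-(γ/2)) + Real.exp (-(γ/2))^2)^2) := by
  set y := Real.exp (-(γ/2)) with hydef
  have hy0 : 0 < y := Real.exp_pos _
  have hy1 : y < 1 := by
    rw [hydef]; apply Real.exp_lt_one_iff.2; linarith
  have hq : (0:ℝ) < 1 - y + y^2 := by nlinarith
  have hc : γ ≠ 0 := ne_of_gt hγ
  have h2c : (2*γ) ≠ 0 := by positivity
  have h1 : Real.exp (-γ) = y^2 := by
    rw [hydef, ← Real.exp_nat_mul]; norm_num; ring
  have h4 : Real.exp γ = (y^2)⁻¹ := by rw [← h1, ← Real.exp_neg, neg_neg]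
  have h5 : Real.exp (γ/2) = y⁻¹ := by rw [hydef, ← Real.exp_neg, neg_neg]
  have h1' : Real.exp (-(2*γ)) = y^4 := by
    rw [hydef, ← Real.exp_nat_mul]; norm_num; ring
  have h4' : Real.exp (2*γ) = (y^4)⁻¹ := by rw [← h1', ← Real.exp_neg, neg_neg]
  have h2u : Real.exp (2*γ*uLoc γ fhex) = (1/(1 - y + y^2)) * (1/(1 - y + y^2)) := by
    rw [uLoc_closed γ hγ, ← hydef,
      show 2*γ*((1/γ) * Real.log (1/(1 - y + y^2)))
        = Real.log (1/(1 - y + y^2)) + Real.log (1/(1 - y + y^2)) by field_simp; ring,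
      Real.exp_add, Real.exp_log (by positivity)]
  have hfun : (fun s => Real.exp (2*γ*(uLoc γ fhex + s - fhex s)) - Real.exp (2*γ*s))
      = (fun s => Real.exp (2*γ*uLoc γ fhex) * Real.exp ((2*γ) * (s - fhex s)) - Real.exp (2*γ*s)) := by
    funext s; rw [← Real.exp_add]; ring_nf
  unfold sigmaSq
  rw [hfun]
  rw [intervalIntegral.integral_sub ((intbleF (2*γ)).const_mul _)
    (((by fun_prop : Continuous fun s : ℝ => Real.exp (2*γ*s))).intervalIntegrable 0 1),
    intervalIntegral.integral_const_mul, fInt (2*γ) h2c, expInt (2*γ) h2c, h2u]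
  rw [show 2*γ*1 = 2*γ by ring, show 2*γ*0 = 0 by ring, Real.exp_zero,
    show 2*γ/2 - 2*γ = -γ by ring, show 2*γ/2 = γ by ring]
  rw [h1, h4, h5, h1', h4']
  have n1 : (1:ℝ) - y ≠ 0 := by linarith
  have n2 : (1:ℝ) + y ≠ 0 := by linarith
  have n3 : (1:ℝ) + y^2 ≠ 0 := by nlinarith
  have he2 : (y^2)⁻¹ - 1 = ((1-y)*(1+y))/y^2 := by field_simp; ring
  have he4 : (y^4)⁻¹ - 1 = ((1-y)*(1+y)*(1+y^2))/y^4 := by field_simp; ring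
  have heD : y^2 - y^4 + (y^4)⁻¹ - (y^2)⁻¹
      = ((1-y)*(1+y)*(1+y^2)*(1 - y^2 + y^4))/y^4 := by field_simp; ring
  rw [he2, he4, heD]
  field_simp [ne_of_gt hq, n1, n2, n3]
  ring

end HexAux

/-- for the hexagonal profile `f = 1` on `[0,1/2]`, `0` on `(1/2,1]`,
`γ e^{γ/2} u(γ) → 1` and `γ e^{γ/2} σ²(γ) → 1` as `γ → +∞`. -/
theorem asymptotics_hexagon_profile :
    Tendsto (fun γ : ℝ =>
        γ * Real.exp (γ/2) * uLoc γ (fun s => if s ≤ 1/2 then 1 else 0))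
      atTop (𝓝 1) ∧
    Tendsto (fun γ : ℝ =>
        γ * Real.exp (γ/2) * sigmaSq γ (fun s => if s ≤ 1/2 then 1 else 0))
      atTop (𝓝 1) := by
  have hf : (fun s : ℝ => if s ≤ 1/2 then (1:ℝ) else 0) = HexAux.fhex := rfl
  rw [hf]
  have hyt : Tendsto (fun γ : ℝ => Real.exp (-(γ/2))) atTop (𝓝 0) := by
    apply Real.tendsto_exp_atBot.comp
    have h : Tendsto (fun γ : ℝ => γ/2) atTop atTop :=
      tendsto_id.atTop_div_const (by norm_num)
    exact tendsto_neg_atTop_atBot.comp h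
  have hyt' : Tendsto (fun γ : ℝ => Real.exp (-(γ/2))) atTop (𝓝[≠] 0) := by
    apply tendsto_nhdsWithin_of_tendsto_nhds_of_eventually_within _ hyt
    exact Eventually.of_forall fun γ => by simp [Real.exp_ne_zero]
  constructor
  · -- first limit
    have hL : HasDerivAt (fun y : ℝ => Real.log (1 - y + y^2)) (-1) 0 := by
      have hp : HasDerivAt (fun y : ℝ => 1 - y + y^2) (-1) 0 := by
        have h : HasDerivAt (fun y : ℝ => 1 - y + y^2) (-1 + ((2:ℕ):ℝ) * (0:ℝ)^(2-1)) 0 :=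
          ((hasDerivAt_id' (0:ℝ)).const_sub 1).add (hasDerivAt_pow 2 (0:ℝ))
        convert h using 1; norm_num
      have := hp.log (by norm_num)
      convert this using 1; norm_num
    have hslope := hasDerivAt_iff_tendsto_slope.mp hL
    have h2 : Tendsto (fun y : ℝ => Real.log (1 - y + y^2) / y) (𝓝[≠] 0) (𝓝 (-1)) := by
      apply hslope.congr
      intro y
      rw [slope_def_field]
      norm_num
    have h3 : Tendsto (fun y : ℝ => -Real.log (1 - y + y^2) / y) (𝓝[≠] 0) (𝓝 1) := by
      have := h2.neg
      simp only [neg_neg] at this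
      exact this.congr fun y => by rw [neg_div]
    apply Tendsto.congr' _ (h3.comp hyt')
    filter_upwards [eventually_gt_atTop 0] with γ hγ
    exact (HexAux.target1_eq γ hγ).symm
  · -- second limit
    have hG : Tendsto (fun y : ℝ => ((1 + y^2) * (1 - y)) / ((1 + y) * (1 - y + y^2)^2))
        (𝓝 0) (𝓝 1) := by
      have hcont : ContinuousAt (fun y : ℝ => ((1 + y^2) * (1 - y)) / ((1 + y) * (1 - y + y^2)^2)) 0 := by
        apply ContinuousAt.div (by fun_prop) (by fun_prop) (by norm_num)
      have := hcont.tendsto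
      norm_num at this
      exact this
    apply Tendsto.congr' _ (hG.comp hyt)
    filter_upwards [eventually_gt_atTop 0] with γ hγ
    exact (HexAux.sigma_closed γ hγ).symm
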